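/- Let R be a projective-free ring and let φ be a 2 × 2 matrix over R. Then φ is strongly J^#-clean in M₂(R) if and only if one of the following holds: (1) χ(φ) ≡ t² modulo J(R); or (2) χ(φ) ≡ (t − 1)² modulo J(R); or (3) χ(φ) has a root in J(R) and a root in 1 + J(R). -/

import Mathlib

open Polynomial

universe u

/-- The Jacobson radical of a ring: the intersection of all maximal (left) ideals. -/
def jacobsonRadical (R : Type*) [Ring R] : Ideal R := Ideal.jacobson (⊥ : Ideal R)

/-- `J^#(R) = {x ∈ R : x ^ n ∈ J(R) for some n ∈ ℕ}`. -/
def Jsharp (R : Type*) [Ring R] : Set R :=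
  {x | ∃ n : ℕ, 0 < n ∧ x ^ n ∈ jacobsonRadical R}

/-- An element `a` is strongly `J^#`-clean if `a = e + u` with `e` idempotent,
`u ∈ J^#(R)` and `e * a = a * e`. -/
def IsStronglyJsharpClean {R : Type*} [Ring R] (a : R) : Prop :=
  ∃ e : R, IsIdempotentElem e ∧ a - e ∈ Jsharp R ∧ e * a = a * e

/-- A commutative ring is projective-free if every finitely generated projective
module is free. -/
def IsProjectiveFree (R : Type u) [CommRing R] : Prop :=
  ∀ (M : Type u) [AddCommGroup M] [Module R M],
    Module.Finite R M → Module.Projective R M → Module.Free R M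

/-- `𝕁_r`: monic polynomials congruent to `(t - r) ^ deg f` modulo `J^#(R)`. -/
def Jpoly {R : Type*} [CommRing R] (r : R) : Set R[X] :=
  {f | f.Monic ∧ ∀ i, (f - (X - C r) ^ f.natDegree).coeff i ∈ Jsharp R}

section Auxiliary

variable {R : Type u} [CommRing R]

local notation "Mat" => Matrix (Fin 2) (Fin 2) R

lemma mem_jr_of_pow {a : R} {n : ℕ} (h : a ^ n ∈ jacobsonRadical R) :
    a ∈ jacobsonRadical R :=
  Ideal.isRadical_jacobson (⊥ : Ideal R) ⟨n, h⟩

/-- The column left-ideal. -/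
def colIdeal (m : Ideal R) (j : Fin 2) : Ideal Mat where
  carrier := {A | ∀ i, A i j ∈ m}
  zero_mem' := by intro i; simp
  add_mem' := by intro A B hA hB i; exact m.add_mem (hA i) (hB i)
  smul_mem' := by
    intro Y A hA i
    show (Y * A) i j ∈ m
    rw [Matrix.mul_apply]
    exact Ideal.sum_mem m fun k _ => m.mul_mem_left _ (hA k)

lemma mem_colIdeal {m : Ideal R} {j : Fin 2} {A : Mat} :
    A ∈ colIdeal m j ↔ ∀ i, A i j ∈ m := Iff.rfl

lemma isUnit_one_add' {a : R} (ha : a ∈ jacobsonRadical R) : IsUnit (1 + a) :=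
  Ideal.isUnit_of_sub_one_mem_jacobson_bot (1 + a) (by simpa [jacobsonRadical] using ha)

lemma colIdeal_isMaximal (m : Ideal R) (hm : m.IsMaximal) (j : Fin 2) :
    (colIdeal m j).IsMaximal := by
  constructor
  constructor
  · intro htop
    have h1 : (1 : Mat) ∈ colIdeal m j := htop ▸ Submodule.mem_top
    have := h1 j
    simp [Matrix.one_apply] at this
    exact hm.ne_top (m.eq_top_iff_one.mpr this)
  · intro K hK
    rw [lt_iff_le_and_ne] at hK
    obtain ⟨hle, hne⟩ := hK
    have : ∃ A : Mat, A ∈ K ∧ A ∉ colIdeal m j := by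
      by_contra h
      push_neg at h
      exact hne (le_antisymm hle h)
    obtain ⟨A, hAK, hAL⟩ := this
    rw [mem_colIdeal] at hAL
    push_neg at hAL
    obtain ⟨i0, hi0⟩ := hAL
    obtain ⟨r, c, hc, hrc⟩ := hm.exists_inv hi0
    set Y : Mat := Matrix.single j i0 r with hY
    have hYA : ∀ k l, (Y * A) k l = if k = j then r * A i0 l else 0 := by
      intro k l
      rw [Matrix.mul_apply]
      simp [hY, Matrix.single, ite_and, eq_comm (a := k)]
    have hmem : (1 : Mat) - Y * A ∈ colIdeal m j := by
      intro i
      rw [Matrix.sub_apply, hYA]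
      by_cases hij : i = j
      · rw [if_pos hij, hij, Matrix.one_apply_eq]
        have hcc : (1 : R) - r * A i0 j = c := by linear_combination -hrc
        rw [hcc]; exact hc
      · rw [if_neg hij, Matrix.one_apply_ne hij, sub_zero]; exact m.zero_mem
    have h1K : (1 : Mat) ∈ K := by
      have : (1 : Mat) = ((1 : Mat) - Y * A) + Y * A := by abel
      rw [this]
      exact K.add_mem (hle hmem) (K.smul_mem Y hAK)
    exact K.eq_top_iff_one.mpr h1K

lemma mem_jacobson_matrix {x : Mat} :
    x ∈ jacobsonRadical Mat ↔ ∀ i j, x i j ∈ jacobsonRadical R := by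
  constructor
  · intro hx i j
    rw [jacobsonRadical, Ideal.jacobson, Submodule.mem_sInf]
    rintro m ⟨-, hm⟩
    have hL := (Submodule.mem_sInf.mp hx) (colIdeal m j) ⟨bot_le, colIdeal_isMaximal m hm j⟩
    exact hL i
  · intro hx
    rw [jacobsonRadical, Ideal.jacobson, Submodule.mem_sInf]
    rintro L ⟨-, hL⟩
    by_contra hxL
    have hsup : L ⊔ Submodule.span Mat {x} = ⊤ := by
      rcases hL with ⟨hne, hmax⟩
      refine hmax _ (lt_of_le_of_ne le_sup_left ?_)
      intro h
      exact hxL (h ▸ (le_sup_right (a := L)) (Submodule.mem_span_singleton_self x))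
    have h1 : (1 : Mat) ∈ L ⊔ Submodule.span Mat {x} := hsup ▸ Submodule.mem_top
    obtain ⟨a, ha, b, hb, hab⟩ := Submodule.mem_sup.mp h1
    obtain ⟨y, rfl⟩ := Submodule.mem_span_singleton.mp hb
    have hyx : ∀ i j, (y • x) i j ∈ jacobsonRadical R := by
      intro i j
      show (y * x) i j ∈ _
      rw [Matrix.mul_apply]
      exact Ideal.sum_mem _ fun k _ => Ideal.mul_mem_left _ _ (hx k j)
    have hdet : IsUnit a.det := by
      have ha' : a = 1 - y • x := by rw [← hab]; abel
      rw [ha', Matrix.det_fin_two]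
      have : ((1 : Mat) - y • x) 0 0 * ((1 : Mat) - y • x) 1 1 -
          ((1 : Mat) - y • x) 0 1 * ((1 : Mat) - y • x) 1 0 =
          1 + (-( (y • x) 0 0) - (y • x) 1 1 + (y • x) 0 0 * (y • x) 1 1
            - (y • x) 0 1 * (y • x) 1 0) := by
        simp [Matrix.sub_apply, Matrix.one_apply]
        ring
      rw [this]
      refine isUnit_one_add' ?_
      refine Ideal.sub_mem _ (Ideal.add_mem _ (Ideal.sub_mem _ (neg_mem ?_) ?_) ?_) ?_
      · exact hyx 0 0
      · exact hyx 1 1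
      · exact Ideal.mul_mem_left _ _ (hyx 1 1)
      · exact Ideal.mul_mem_left _ _ (hyx 1 0)
    have haU : IsUnit a := (Matrix.isUnit_iff_isUnit_det a).mpr hdet
    exact hL.ne_top (Ideal.eq_top_of_isUnit_mem L ha haU)

lemma charpoly_two (A : Mat) :
    A.charpoly = X ^ 2 - C A.trace * X + C A.det := by
  rw [Matrix.charpoly, Matrix.det_fin_two, Matrix.trace_fin_two, Matrix.det_fin_two]
  simp [Matrix.charmatrix_apply_eq, Matrix.charmatrix_apply_ne]
  ring

lemma cayley_two (A : Mat) : A ^ 2 = A.trace • A - A.det • (1 : Mat) := by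
  ext i j
  fin_cases i <;> fin_cases j <;>
    simp [pow_two, Matrix.mul_apply, Fin.sum_univ_two, Matrix.trace_fin_two,
      Matrix.det_fin_two, Matrix.one_apply] <;> ring

lemma trace_det_mem_of_pow (A : Mat) {n : ℕ} (hn : 0 < n)
    (h : ∀ i j, (A ^ n) i j ∈ jacobsonRadical R) :
    A.trace ∈ jacobsonRadical R ∧ A.det ∈ jacobsonRadical R := by
  set J := jacobsonRadical R
  set s := A.trace
  set d := A.det
  have hd : d ∈ J := by
    apply mem_jr_of_pow (n := n)
    have : d ^ n = (A ^ n).det := by rw [Matrix.det_pow]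
    rw [this, Matrix.det_fin_two]
    exact Ideal.sub_mem _ (Ideal.mul_mem_left _ _ (h 1 1)) (Ideal.mul_mem_left _ _ (h 1 0))
  refine ⟨?_, hd⟩
  have key : ∀ k : ℕ, 0 < k → ∃ c e : R, A ^ k = c • A - e • (1 : Mat) ∧
      c - s ^ (k - 1) ∈ J ∧ e ∈ J := by
    intro k hk
    induction k with
    | zero => exact absurd hk (by simp)
    | succ k ih =>
      rcases Nat.eq_zero_or_pos k with hk0 | hk0
      · subst hk0
        exact ⟨1, 0, by simp, by simp, J.zero_mem⟩
      · obtain ⟨c, e, hA, hc, he⟩ := ih hk0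
        refine ⟨c * s - e, c * d, ?_, ?_, Ideal.mul_mem_left _ _ hd⟩
        · have h2 : A ^ (k + 1) = (A ^ k) * A := pow_succ A k
          rw [h2, hA, sub_mul, smul_mul_assoc, smul_mul_assoc, one_mul,
            ← pow_two, cayley_two A]
          ext i j
          simp [Matrix.sub_apply, Matrix.smul_apply, Matrix.one_apply]
          split <;> [skip; skip] <;> ring
        · have hkk : k + 1 - 1 = (k - 1) + 1 := by omega
          rw [hkk, pow_succ]
          have : c * s - e - s ^ (k - 1) * s = (c - s ^ (k - 1)) * s - e := by ring
          rw [this]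
          exact Ideal.sub_mem _ (Ideal.mul_mem_right _ _ hc) he
  obtain ⟨c, e, hA, hc, he⟩ := key n hn
  have htr : (A ^ n).trace ∈ J := by
    rw [Matrix.trace_fin_two]
    exact Ideal.add_mem _ (h 0 0) (h 1 1)
  have htr2 : (A ^ n).trace = c * s - 2 * e := by
    rw [hA, Matrix.trace_fin_two]
    simp [Matrix.sub_apply, Matrix.smul_apply, Matrix.one_apply, Matrix.trace_fin_two, s]
    ring
  have hcs : c * s ∈ J := by
    have : c * s = (A ^ n).trace + 2 * e := by rw [htr2]; ring
    rw [this]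
    exact Ideal.add_mem _ htr (Ideal.mul_mem_left _ _ he)
  have hsn : s ^ n ∈ J := by
    have hnn : n = (n - 1) + 1 := by omega
    have hsp : s ^ n = s ^ (n - 1) * s := by rw [← pow_succ, ← hnn]
    have : s ^ n = c * s - (c - s ^ (n - 1)) * s := by rw [hsp]; ring
    rw [this]
    exact Ideal.sub_mem _ hcs (Ideal.mul_mem_right _ _ hc)
  exact mem_jr_of_pow hsn

lemma coeff_lin_mem {a b : R} (ha : a ∈ jacobsonRadical R) (hb : b ∈ jacobsonRadical R) :
    ∀ i, (C a - C b * X : R[X]).coeff i ∈ jacobsonRadical R := by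
  intro i
  rcases i with _ | _ | i <;>
    simp only [coeff_sub, coeff_C_mul, coeff_X_zero, coeff_X_one, coeff_C, if_pos rfl,
      mul_zero, mul_one, sub_zero, zero_sub, coeff_X] <;>
    simp_all [Ideal.neg_mem_iff]

lemma coeff_lin_mem_iff {a b : R} :
    (∀ i, (C a - C b * X : R[X]).coeff i ∈ jacobsonRadical R) ↔
      a ∈ jacobsonRadical R ∧ b ∈ jacobsonRadical R := by
  refine ⟨fun h => ⟨?_, ?_⟩, fun ⟨ha, hb⟩ => coeff_lin_mem ha hb⟩
  · have := h 0
    simpa using this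
  · have := h 1
    simp at this
    simpa using (Ideal.neg_mem_iff _).mpr this

lemma coeff_case1 {A : Mat} :
    (∀ i, (A.charpoly - X ^ 2).coeff i ∈ jacobsonRadical R) ↔
      (A.trace ∈ jacobsonRadical R ∧ A.det ∈ jacobsonRadical R) := by
  rw [charpoly_two]
  have hpoly : (X ^ 2 - C A.trace * X + C A.det - X ^ 2 : R[X]) = C A.det - C A.trace * X := by
    ring
  rw [hpoly, coeff_lin_mem_iff, and_comm]

lemma coeff_case2 {A : Mat} :
    (∀ i, (A.charpoly - (X - 1) ^ 2).coeff i ∈ jacobsonRadical R) ↔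
      (A.trace - 2 ∈ jacobsonRadical R ∧ A.det - 1 ∈ jacobsonRadical R) := by
  rw [charpoly_two]
  have h2 : (C (2:R) : R[X]) = 2 := map_ofNat C 2
  have hpoly : (X ^ 2 - C A.trace * X + C A.det - (X - 1) ^ 2 : R[X]) =
      C (A.det - 1) - C (A.trace - 2) * X := by
    rw [C_sub, C_sub, C_1, h2]
    ring
  rw [hpoly, coeff_lin_mem_iff, and_comm]

lemma conj_mul_conj (u : Matˣ) (A B : Mat) :
    ((↑u⁻¹ : Mat) * A * (↑u : Mat)) * ((↑u⁻¹ : Mat) * B * (↑u : Mat)) =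
      (↑u⁻¹ : Mat) * (A * B) * (↑u : Mat) := by
  simp [mul_assoc, Units.mul_inv_cancel_left]

lemma charpoly_conj (u : Matˣ) (A : Mat) :
    ((↑u⁻¹ : Mat) * A * (↑u : Mat)).charpoly = A.charpoly := by
  rw [charpoly_two, charpoly_two]
  have htr : ((↑u⁻¹ : Mat) * A * (↑u : Mat)).trace = A.trace := by
    rw [Matrix.trace_mul_cycle, Units.mul_inv, one_mul]
  have hdet : ((↑u⁻¹ : Mat) * A * (↑u : Mat)).det = A.det := by
    rw [Matrix.det_mul, Matrix.det_mul]
    have : (↑u⁻¹ : Mat).det * A.det * (↑u : Mat).det =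
        ((↑u⁻¹ : Mat).det * (↑u : Mat).det) * A.det := by ring
    rw [this, ← Matrix.det_mul, Units.inv_mul, Matrix.det_one, one_mul]
  rw [htr, hdet]

lemma entries_conj_mem {u : Matˣ} {Y : Mat}
    (hY : ∀ i j, Y i j ∈ jacobsonRadical R) :
    ∀ i j, ((↑u⁻¹ : Mat) * Y * (↑u : Mat)) i j ∈ jacobsonRadical R := by
  intro i j
  rw [Matrix.mul_apply]
  refine Ideal.sum_mem _ fun k _ => Ideal.mul_mem_right _ _ ?_
  rw [Matrix.mul_apply]
  exact Ideal.sum_mem _ fun l _ => Ideal.mul_mem_left _ _ (hY l k)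

lemma idem_classify (hR : IsProjectiveFree R) (e : Mat) (he : IsIdempotentElem e) :
    e = 0 ∨ e = 1 ∨ ∃ u : Matˣ, (↑u⁻¹ : Mat) * e * (↑u : Mat) = Matrix.diagonal ![1, 0] := by
  by_cases hcs : Subsingleton R
  · left; exact Subsingleton.elim e 0
  haveI hnt : Nontrivial R := not_subsingleton_iff_nontrivial.mp hcs
  classical
  set f : (Fin 2 → R) →ₗ[R] (Fin 2 → R) := Matrix.toLin' e with hfdef
  have hf : f ∘ₗ f = f := by rw [hfdef, ← Matrix.toLin'_mul, he]
  have hff : ∀ x, f (f x) = f x := fun x => by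
    have := LinearMap.congr_fun hf x
    simpa using this
  obtain ⟨p, hp⟩ := (LinearMap.isProj_iff_isIdempotentElem f).mpr hf
  set q := LinearMap.ker f with hqdef
  have hcompl : IsCompl p q := hp.isCompl
  have hker : ∀ v, v - f v ∈ q := fun v => by
    rw [hqdef, LinearMap.mem_ker, map_sub, hff, sub_self]
  set g : (Fin 2 → R) →ₗ[R] (Fin 2 → R) := LinearMap.id - f with hgdef
  have hq : LinearMap.IsProj q g := by
    constructor
    · intro x
      have hgx : g x = x - f x := by simp [hgdef]
      rw [hgx]
      exact hker x
    · intro x hx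
      have hx0 : f x = 0 := hx
      simp [hgdef, hx0]
  have hsurp : Function.Surjective hp.codRestrict := fun y =>
    ⟨(y : Fin 2 → R), by ext; simp [hp.map_id _ y.2]⟩
  have hsurq : Function.Surjective hq.codRestrict := fun y =>
    ⟨(y : Fin 2 → R), by ext; simp [hq.map_id _ y.2]⟩
  haveI hfinp : Module.Finite R p := Module.Finite.of_surjective _ hsurp
  haveI hfinq : Module.Finite R q := Module.Finite.of_surjective _ hsurq
  haveI hprojp : Module.Projective R p :=
    Module.Projective.of_split p.subtype hp.codRestrict (by ext x; simp)
  haveI hprojq : Module.Projective R q :=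
    Module.Projective.of_split q.subtype hq.codRestrict (by ext x; simp)
  haveI hfreep : Module.Free R p := hR p hfinp hprojp
  haveI hfreeq : Module.Free R q := hR q hfinq hprojq
  set ιp := Module.Free.ChooseBasisIndex R p
  set ιq := Module.Free.ChooseBasisIndex R q
  set bp := Module.Free.chooseBasis R p with hbp
  set bq := Module.Free.chooseBasis R q with hbq
  set B : Module.Basis (ιp ⊕ ιq) R (Fin 2 → R) :=
    (bp.prod bq).map (Submodule.prodEquivOfIsCompl p q hcompl) with hB
  haveI hsrc : StrongRankCondition R := commRing_strongRankCondition R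
  have hcard : Fintype.card ιp + Fintype.card ιq = 2 := by
    have h1 := Module.finrank_eq_card_basis B
    have h2 : Module.finrank R (Fin 2 → R) = 2 := by
      simp [Module.finrank_pi]
    rw [h2] at h1
    rw [← Fintype.card_sum]
    exact h1.symm
  have hBinl : ∀ k, B (Sum.inl k) ∈ p := by
    intro k
    rw [hB]
    simp only [Module.Basis.map_apply]
    rw [Module.Basis.prod_apply]
    simp [Submodule.coe_prodEquivOfIsCompl']
  have hBinr : ∀ k, B (Sum.inr k) ∈ q := by
    intro k
    rw [hB]
    simp only [Module.Basis.map_apply]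
    rw [Module.Basis.prod_apply]
    simp [Submodule.coe_prodEquivOfIsCompl']
  rcases Nat.lt_or_ge (Fintype.card ιp) 1 with hc0 | hc1
  · -- card ιp = 0 : p = ⊥, e = 0
    left
    haveI : IsEmpty ιp := Fintype.card_eq_zero_iff.mp (by omega)
    haveI hsub : Subsingleton p :=
      ⟨fun a b => bp.repr.injective (by ext i; exact isEmptyElim i)⟩
    have hpbot : p = ⊥ := Submodule.eq_bot_of_subsingleton
    have hf0 : f = 0 := by
      refine LinearMap.ext fun v => ?_
      have hm := hp.map_mem v
      rw [hpbot, Submodule.mem_bot] at hm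
      simp [hm]
    apply Matrix.toLin'.injective
    simp [← hfdef, hf0]
  rcases Nat.lt_or_ge (Fintype.card ιq) 1 with hd0 | hd1
  · -- card ιq = 0 : ker f = ⊥, e = 1
    right; left
    haveI : IsEmpty ιq := Fintype.card_eq_zero_iff.mp (by omega)
    haveI hsub : Subsingleton q :=
      ⟨fun a b => bq.repr.injective (by ext i; exact isEmptyElim i)⟩
    have hqbot : q = ⊥ := Submodule.eq_bot_of_subsingleton
    have hfid : f = LinearMap.id := by
      refine LinearMap.ext fun v => ?_
      have hmem := hker v
      rw [hqbot, Submodule.mem_bot, sub_eq_zero] at hmem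
      rw [← hmem]
      simp
    apply Matrix.toLin'.injective
    rw [← hfdef, hfid, Matrix.toLin'_one]
  · -- card ιp = card ιq = 1
    right; right
    have hcp : Fintype.card ιp = 1 := by omega
    have hcq : Fintype.card ιq = 1 := by omega
    set ep : ιp ≃ Fin 1 := Fintype.equivFinOfCardEq hcp
    set eq' : ιq ≃ Fin 1 := Fintype.equivFinOfCardEq hcq
    set E : (ιp ⊕ ιq) ≃ Fin 2 :=
      (Equiv.sumCongr ep eq').trans (finSumFinEquiv.trans (finCongr rfl)) with hE
    set B2 := B.reindex E with hB2
    have hB20 : (B2 0 : Fin 2 → R) ∈ p := by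
      have h0 : E (Sum.inl (ep.symm 0)) = 0 := by
        simp [hE, finSumFinEquiv] <;> rfl
      have : B2 0 = B (Sum.inl (ep.symm 0)) := by
        rw [hB2, Module.Basis.reindex_apply, ← h0, Equiv.symm_apply_apply]
      rw [this]
      exact hBinl _
    have hB21 : (B2 1 : Fin 2 → R) ∈ q := by
      have h1 : E (Sum.inr (eq'.symm 0)) = 1 := by
        simp [hE, finSumFinEquiv] <;> rfl
      have : B2 1 = B (Sum.inr (eq'.symm 0)) := by
        rw [hB2, Module.Basis.reindex_apply, ← h1, Equiv.symm_apply_apply]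
      rw [this]
      exact hBinr _
    set P : Mat := (Pi.basisFun R (Fin 2)).toMatrix ⇑B2 with hPdef
    have hPapp : ∀ i j, P i j = B2 j i := by
      intro i j
      rw [hPdef, Module.Basis.toMatrix_apply]
      simp
    haveI : Invertible P := (Pi.basisFun R (Fin 2)).invertibleToMatrix B2
    set u : Matˣ := unitOfInvertible P with hu
    have hcol : ∀ j i, (e * P) i j = (f (B2 j)) i := by
      intro j i
      simp [Matrix.mul_apply, hfdef, Matrix.toLin'_apply, Matrix.mulVec,
        dotProduct, hPapp]
    have heP : e * P = P * (Matrix.diagonal ![1, 0] : Mat) := by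
      have h0 : ∀ i, (e * P) i 0 = (P * (Matrix.diagonal ![1, 0] : Mat)) i 0 := by
        intro i
        rw [Matrix.mul_diagonal, hcol, hp.map_id _ hB20]
        simp [hPapp]
      have h1 : ∀ i, (e * P) i 1 = (P * (Matrix.diagonal ![1, 0] : Mat)) i 1 := by
        intro i
        have hz : f (B2 1) = 0 := hB21
        rw [Matrix.mul_diagonal, hcol, hz]
        simp
      ext i j
      fin_cases j
      · exact h0 i
      · exact h1 i
    refine ⟨u, ?_⟩
    have hiu : (↑u⁻¹ : Mat) = ⅟P := rfl
    have huc : (↑u : Mat) = P := rfl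
    rw [hiu, huc, mul_assoc, heP, ← mul_assoc, invOf_mul_self, one_mul]

end Auxiliary

/-- a `2 × 2` matrix `φ` over a projective-free ring is strongly
`J^#`-clean iff `χ(φ) ≡ t² (mod J(R))`, or `χ(φ) ≡ (t-1)² (mod J(R))`, or `χ(φ)`
has a root in `J(R)` and a root in `1 + J(R)`. -/
theorem stronglyJsharpClean_two_iff {R : Type u} [CommRing R] (hR : IsProjectiveFree R)
    (φ : Matrix (Fin 2) (Fin 2) R) :
    IsStronglyJsharpClean φ ↔
      (∀ i, (φ.charpoly - X ^ 2).coeff i ∈ jacobsonRadical R) ∨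
      (∀ i, (φ.charpoly - (X - 1) ^ 2).coeff i ∈ jacobsonRadical R) ∨
      (∃ a b : R, a ∈ jacobsonRadical R ∧ b - 1 ∈ jacobsonRadical R ∧
        φ.charpoly.eval a = 0 ∧ φ.charpoly.eval b = 0) := by
  constructor
  · rintro ⟨e, he, ⟨n, hn, hmem⟩, hcomm⟩
    have hentries : ∀ i j, ((φ - e) ^ n) i j ∈ jacobsonRadical R :=
      mem_jacobson_matrix.mp hmem
    rcases idem_classify hR e he with rfl | rfl | ⟨u, hu⟩
    · left
      rw [coeff_case1]
      exact trace_det_mem_of_pow φ hn (by simpa using hentries)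
    · right; left
      rw [coeff_case2]
      obtain ⟨hts, htd⟩ := trace_det_mem_of_pow (φ - 1) hn hentries
      constructor
      · have htr : (φ - (1 : Matrix (Fin 2) (Fin 2) R)).trace = φ.trace - 2 := by
          rw [Matrix.trace_sub, Matrix.trace_one]
          norm_num
        rwa [htr] at hts
      · have hdet : φ.det - 1 = (φ - 1).det + (φ - 1).trace := by
          simp [Matrix.det_fin_two, Matrix.trace_fin_two, Matrix.sub_apply, Matrix.one_apply]
          ring
        rw [hdet]
        exact Ideal.add_mem _ htd hts
    · right; right
      set ψ : Matrix (Fin 2) (Fin 2) R :=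
        (↑u⁻¹ : Matrix (Fin 2) (Fin 2) R) * φ * (↑u : Matrix (Fin 2) (Fin 2) R) with hψ
      set D : Matrix (Fin 2) (Fin 2) R := Matrix.diagonal ![1, 0] with hD
      have hψcomm : D * ψ = ψ * D := by
        rw [← hu, hψ, conj_mul_conj, conj_mul_conj, hcomm]
      have hψ01 : ψ 0 1 = 0 := by
        have h := congrFun (congrFun hψcomm 0) 1
        simpa [hD, Matrix.mul_apply, Fin.sum_univ_two, Matrix.diagonal] using h
      have hψ10 : ψ 1 0 = 0 := by
        have h := congrFun (congrFun hψcomm 1) 0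
        simpa [hD, Matrix.mul_apply, Fin.sum_univ_two, Matrix.diagonal] using h.symm
      set a : R := ψ 0 0 with hadef
      set b : R := ψ 1 1 with hbdef
      have hψdiag : ψ - D = Matrix.diagonal ![a - 1, b] := by
        ext i j
        fin_cases i <;> fin_cases j <;>
          simp [hD, Matrix.sub_apply, Matrix.diagonal, hψ01, hψ10] <;> rfl
      have hconj : ψ - D =
          (↑u⁻¹ : Matrix (Fin 2) (Fin 2) R) * (φ - e) * (↑u : Matrix (Fin 2) (Fin 2) R) := by
        rw [hψ, ← hu]
        simp [mul_sub, sub_mul]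
      have hpowmem : ∀ i j, ((ψ - D) ^ n) i j ∈ jacobsonRadical R := by
        rw [hconj]
        intro i j
        rw [Units.conj_pow']
        exact entries_conj_mem hentries i j
      have hdiagpow : (ψ - D) ^ n = Matrix.diagonal (![a - 1, b] ^ n) := by
        rw [hψdiag, Matrix.diagonal_pow]
      have ha1 : a - 1 ∈ jacobsonRadical R := by
        apply mem_jr_of_pow (n := n)
        have := hpowmem 0 0
        rwa [hdiagpow, Matrix.diagonal_apply_eq, Pi.pow_apply, Matrix.cons_val_zero] at this
      have hb : b ∈ jacobsonRadical R := by
        apply mem_jr_of_pow (n := n)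
        have := hpowmem 1 1
        rwa [hdiagpow, Matrix.diagonal_apply_eq, Pi.pow_apply, Matrix.cons_val_one,
          Matrix.cons_val_zero] at this
      have hch : φ.charpoly = ψ.charpoly := (charpoly_conj u φ).symm
      refine ⟨b, a, hb, ha1, ?_, ?_⟩
      · rw [hch, charpoly_two]
        simp [Matrix.trace_fin_two, Matrix.det_fin_two, hψ01, ← hadef, ← hbdef]
        ring
      · rw [hch, charpoly_two]
        simp [Matrix.trace_fin_two, Matrix.det_fin_two, hψ01, ← hadef, ← hbdef]
        ring
  · rintro (h1 | h2 | ⟨a, b, ha, hb1, hea, heb⟩)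
    · obtain ⟨hs, hd⟩ := coeff_case1.mp h1
      refine ⟨0, IsIdempotentElem.zero, ⟨2, by norm_num, ?_⟩, by simp⟩
      rw [sub_zero, mem_jacobson_matrix, cayley_two]
      intro i j
      simp only [Matrix.sub_apply, Matrix.smul_apply, Matrix.one_apply, smul_eq_mul]
      refine Ideal.sub_mem _ (Ideal.mul_mem_right _ _ hs) (Ideal.mul_mem_right _ _ hd)
    · obtain ⟨hs2, hd1⟩ := coeff_case2.mp h2
      refine ⟨1, IsIdempotentElem.one, ⟨2, by norm_num, ?_⟩, by simp⟩
      have key : (φ - 1) ^ 2 = (φ.trace - 2) • φ + (1 - φ.det) • (1 : Matrix (Fin 2) (Fin 2) R) := by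
        have hsq : (φ - 1) ^ 2 = φ ^ 2 - φ - φ + 1 := by
          noncomm_ring
        rw [hsq, cayley_two]
        ext i j
        simp [Matrix.sub_apply, Matrix.add_apply, Matrix.smul_apply, Matrix.one_apply]
        split_ifs <;> ring
      rw [mem_jacobson_matrix, key]
      intro i j
      simp only [Matrix.add_apply, Matrix.smul_apply, Matrix.one_apply, smul_eq_mul]
      refine Ideal.add_mem _ (Ideal.mul_mem_right _ _ hs2) (Ideal.mul_mem_right _ _ ?_)
      have : (1 : R) - φ.det = -(φ.det - 1) := by ring
      rw [this]
      exact neg_mem hd1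
    · -- case 3
      have hu : IsUnit (b - a) := by
        apply Ideal.isUnit_of_sub_one_mem_jacobson_bot
        have heq : b - a - 1 = (b - 1) - a := by ring
        rw [heq]
        exact Ideal.sub_mem _ hb1 ha
      have ha2 : a * a - φ.trace * a + φ.det = 0 := by
        have := hea
        rw [charpoly_two] at this
        simpa [pow_two, eval_add, eval_sub, eval_mul] using this
      have hb2 : b * b - φ.trace * b + φ.det = 0 := by
        have := heb
        rw [charpoly_two] at this
        simpa [pow_two, eval_add, eval_sub, eval_mul] using this
      obtain ⟨v, hv⟩ := hu
      have hs : φ.trace = a + b := by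
        have hz : (b - a) * (a + b - φ.trace) = 0 := by linear_combination hb2 - ha2
        rw [← hv] at hz
        have := (Units.mul_right_eq_zero v).mp hz
        linear_combination -this
      have hd : φ.det = a * b := by linear_combination ha2 + a * hs
      set X0 : Matrix (Fin 2) (Fin 2) R := φ - a • (1 : Matrix (Fin 2) (Fin 2) R) with hX0
      have hX2 : X0 * X0 = (b - a) • X0 := by
        have hexp : X0 * X0 = φ * φ - a • φ - a • φ +
            (a * a) • (1 : Matrix (Fin 2) (Fin 2) R) := by
          rw [hX0]
          ext i j
          fin_cases i <;> fin_cases j <;>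
            simp [Matrix.mul_apply, Fin.sum_univ_two, Matrix.sub_apply, Matrix.add_apply,
              Matrix.smul_apply, Matrix.one_apply] <;> ring
        have hc : φ * φ = φ.trace • φ - φ.det • (1 : Matrix (Fin 2) (Fin 2) R) := by
          rw [← pow_two, cayley_two]
        rw [hexp, hc, hs, hd, hX0]
        ext i j
        fin_cases i <;> fin_cases j <;>
          simp [Matrix.sub_apply, Matrix.add_apply, Matrix.smul_apply, Matrix.one_apply] <;> ring
      set E : Matrix (Fin 2) (Fin 2) R := (↑v⁻¹ : R) • X0 with hE
      have hvinv : (↑v⁻¹ : R) * (b - a) = 1 := by rw [← hv, Units.inv_mul]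
      refine ⟨E, ?_, ⟨1, one_pos, ?_⟩, ?_⟩
      · show E * E = E
        rw [hE, smul_mul_smul_comm, hX2, smul_smul, mul_assoc, hvinv, mul_one]
      · rw [pow_one, mem_jacobson_matrix]
        intro i j
        rw [hE, hX0]
        simp only [Matrix.sub_apply, Matrix.smul_apply, Matrix.one_apply, smul_eq_mul]
        have h1v : (1 : R) - (↑v⁻¹ : R) ∈ jacobsonRadical R := by
          have heq : (1 : R) - (↑v⁻¹ : R) = (↑v⁻¹ : R) * ((b - a) - 1) := by
            rw [mul_sub, hvinv, mul_one]
          rw [heq]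
          refine Ideal.mul_mem_left _ _ ?_
          have heq2 : b - a - 1 = (b - 1) - a := by ring
          rw [heq2]
          exact Ideal.sub_mem _ hb1 ha
        have hsplit : φ i j - (↑v⁻¹ : R) * (φ i j - a * (if i = j then (1:R) else 0)) =
            (1 - (↑v⁻¹ : R)) * φ i j + ((↑v⁻¹ : R) * a) * (if i = j then (1:R) else 0) := by
          ring
        rw [hsplit]
        exact Ideal.add_mem _ (Ideal.mul_mem_right _ _ h1v)
          (Ideal.mul_mem_right _ _ (Ideal.mul_mem_left _ _ ha))
      · show E * φ = φ * E
        rw [hE, smul_mul_assoc, mul_smul_comm]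
        congr 1
        rw [hX0, sub_mul, mul_sub, smul_mul_assoc, mul_smul_comm, one_mul, mul_one]
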